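/- arXiv:math/0605559 — 5 statements merged into one kernel-verified Lean document; each statement's English description precedes it below -/
import Mathlib

section
/- In dimension n = 2, the function w(x₁,x₂) = e^{x₁} is positive on ℝ² and satisfies w·Δw - |∇w|² = 0 everywhere, i.e., λ(A_w) ∈ ∂Γ₁ where A_w = w∇²w - (|∇w|²/2)I. Hence the Liouville property for λ(A_w) ∈ ∂Γ₁ fails in dimension 2 (w is a nonconstant positive smooth solution). -/
open scoped BigOperators
noncomputable section

abbrev Euc (n : ℕ) := EuclideanSpace ℝ (Fin n)

/-- First partial derivative of `f` at `x` in direction `i`. -/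
def pd {n : ℕ} (f : Euc n → ℝ) (x : Euc n) (i : Fin n) : ℝ :=
  fderiv ℝ f x (EuclideanSpace.single i 1)

/-- Second partial derivative (Hessian entry) of `f` at `x`. -/
def hess {n : ℕ} (f : Euc n → ℝ) (x : Euc n) (i j : Fin n) : ℝ :=
  fderiv ℝ (fun y => fderiv ℝ f y (EuclideanSpace.single i 1)) x (EuclideanSpace.single j 1)

lemma exp0_hasFDerivAt (x : Euc 2) : HasFDerivAt (fun y : Euc 2 => Real.exp (y 0))
    (Real.exp (x 0) • (EuclideanSpace.proj (0:Fin 2) : Euc 2 →L[ℝ] ℝ)) x := by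
  have h1 : HasFDerivAt (fun y : Euc 2 => y 0)
      (EuclideanSpace.proj (0:Fin 2) : Euc 2 →L[ℝ] ℝ) x :=
    (EuclideanSpace.proj (0:Fin 2) : Euc 2 →L[ℝ] ℝ).hasFDerivAt
  exact (Real.hasDerivAt_exp (x 0)).comp_hasFDerivAt x h1

lemma exp0_fderiv (x : Euc 2) : fderiv ℝ (fun y : Euc 2 => Real.exp (y 0)) x
    = Real.exp (x 0) • (EuclideanSpace.proj (0:Fin 2) : Euc 2 →L[ℝ] ℝ) :=
  (exp0_hasFDerivAt x).fderiv

lemma pd_exp0 (x : Euc 2) (i : Fin 2) :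
    pd (fun y : Euc 2 => Real.exp (y 0)) x i
      = Real.exp (x 0) * (EuclideanSpace.single i (1:ℝ)) 0 := by
  simp [pd, exp0_fderiv x]

lemma hess_exp0 (x : Euc 2) (i j : Fin 2) :
    hess (fun y : Euc 2 => Real.exp (y 0)) x i j
      = Real.exp (x 0) * (EuclideanSpace.single i (1:ℝ)) 0
          * (EuclideanSpace.single j (1:ℝ)) 0 := by
  unfold hess
  have hfun : (fun y : Euc 2 => fderiv ℝ (fun y : Euc 2 => Real.exp (y 0)) y
      (EuclideanSpace.single i (1:ℝ)))
      = fun y : Euc 2 => (EuclideanSpace.single i (1:ℝ)) 0 * Real.exp (y 0) := by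
    funext y
    simp [exp0_fderiv y]
  rw [hfun]
  have h := ((exp0_hasFDerivAt x).const_mul ((EuclideanSpace.single i (1:ℝ)) 0)).fderiv
  rw [h]
  simp [EuclideanSpace.single_apply]
  fin_cases i <;> fin_cases j <;> simp [EuclideanSpace.single_apply]

theorem stmt3 (w : Euc 2 → ℝ) (hw : w = fun x => Real.exp (x 0)) :
    (∀ x, 0 < w x) ∧
    (∀ x : Euc 2, w x * (∑ i, hess w x i i) - ∑ i, (pd w x i)^2 = 0) ∧
    ¬ (∃ c : ℝ, ∀ x, w x = c) := by
  subst hw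
  refine ⟨fun x => Real.exp_pos _, fun x => ?_, ?_⟩
  · rw [Fin.sum_univ_two, Fin.sum_univ_two, pd_exp0, pd_exp0, hess_exp0, hess_exp0]
    rw [EuclideanSpace.single_apply, EuclideanSpace.single_apply]
    norm_num
    ring
  · rintro ⟨c, hc⟩
    have h0 := hc 0
    have h1 := hc (EuclideanSpace.single 0 1)
    simp [EuclideanSpace.single_apply] at h0 h1
    rw [← h0] at h1
    linarith [Real.add_one_le_exp (1:ℝ)]
end
end

section
/- Let B₁ ⊂ ℝ² be the open unit disc, ε > 0, w(x) = (1+ε)e^{-x₁/2} on the closed disc, and v(x) = e^{-x₁|x|⁻²/2} on the closed disc minus the origin. Then w and v are positive, w·Δw - |∇w|² = 0 in B₁, v·Δv - |∇v|² = 0 in B₁∖{0}, and w > v on ∂B₁; yet for sufficiently small ε, inf_{B₁∖{0}}(w - v) < 0. -/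
open scoped BigOperators
noncomputable section

lemma hcoord (i : Fin 2) (y : Euc 2) :
    HasFDerivAt (fun z : Euc 2 => z i) (EuclideanSpace.proj (𝕜:=ℝ) i) y := by
  have h := (EuclideanSpace.proj (𝕜:=ℝ) i).hasFDerivAt (x := y)
  exact h

lemma normsq (y : Euc 2) : ‖y‖^2 = y 0 * y 0 + y 1 * y 1 := by
  rw [EuclideanSpace.norm_eq, Real.sq_sqrt (by positivity)]
  simp [Fin.sum_univ_two, sq]

lemma Qne (y : Euc 2) (hy : y ≠ 0) : y 0 * y 0 + y 1 * y 1 ≠ 0 := by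
  rw [← normsq]; simpa using hy

set_option maxHeartbeats 2000000 in
lemma vderiv (y : Euc 2) (hy : y ≠ 0) :
    ∃ L : Euc 2 →L[ℝ] ℝ, HasFDerivAt
      (fun z : Euc 2 => Real.exp (-(z 0) * (2 * (z 0 * z 0 + z 1 * z 1))⁻¹)) L y ∧
      (∀ i : Fin 2, L (EuclideanSpace.single i 1) =
        Real.exp (-(y 0) * (2 * (y 0 * y 0 + y 1 * y 1))⁻¹) *
          (if i = 0 then (y 0 * y 0 - y 1 * y 1) *
              (2 * ((y 0 * y 0 + y 1 * y 1) * (y 0 * y 0 + y 1 * y 1)))⁻¹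
           else y 0 * y 1 * ((y 0 * y 0 + y 1 * y 1) * (y 0 * y 0 + y 1 * y 1))⁻¹)) := by
  have hQy := Qne y hy
  have hQ : HasFDerivAt (fun z : Euc 2 => z 0 * z 0 + z 1 * z 1) _ y :=
    ((hcoord 0 y).mul (hcoord 0 y)).add ((hcoord 1 y).mul (hcoord 1 y))
  have h2Q := hQ.const_mul (2:ℝ)
  have hne : (2:ℝ) * (y 0 * y 0 + y 1 * y 1) ≠ 0 := by positivity
  have hinv := (hasDerivAt_inv hne).comp_hasFDerivAt y h2Q
  have hv := (((hcoord 0 y).neg).mul hinv).exp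
  refine ⟨_, hv, ?_⟩
  intro i
  fin_cases i <;>
    simp [ContinuousLinearMap.add_apply, ContinuousLinearMap.smul_apply,
      ContinuousLinearMap.neg_apply, PiLp.proj_apply, EuclideanSpace.single_apply,
      Function.comp] <;>
    field_simp <;> ring

set_option maxHeartbeats 2000000 in
lemma cderiv0 (x : Euc 2) (hx : x ≠ 0) :
    ∃ L : Euc 2 →L[ℝ] ℝ, HasFDerivAt
      (fun y : Euc 2 => Real.exp (-(y 0) * (2 * (y 0 * y 0 + y 1 * y 1))⁻¹) *
        ((y 0 * y 0 - y 1 * y 1) * (2 * ((y 0 * y 0 + y 1 * y 1) * (y 0 * y 0 + y 1 * y 1)))⁻¹)) L x ∧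
      L (EuclideanSpace.single 0 1) =
        Real.exp (-(x 0) * (2 * (x 0 * x 0 + x 1 * x 1))⁻¹) *
          (((x 0 * x 0 - x 1 * x 1) * (2 * ((x 0 * x 0 + x 1 * x 1) * (x 0 * x 0 + x 1 * x 1)))⁻¹) *
           ((x 0 * x 0 - x 1 * x 1) * (2 * ((x 0 * x 0 + x 1 * x 1) * (x 0 * x 0 + x 1 * x 1)))⁻¹) +
           (x 0 * (x 0 * x 0 + x 1 * x 1) - 2 * x 0 * (x 0 * x 0 - x 1 * x 1)) *
             ((x 0 * x 0 + x 1 * x 1) * (x 0 * x 0 + x 1 * x 1) * (x 0 * x 0 + x 1 * x 1))⁻¹) := by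
  have hQy := Qne x hx
  have hQ : HasFDerivAt (fun z : Euc 2 => z 0 * z 0 + z 1 * z 1) _ x :=
    ((hcoord 0 x).mul (hcoord 0 x)).add ((hcoord 1 x).mul (hcoord 1 x))
  have h2Q := hQ.const_mul (2:ℝ)
  have hne : (2:ℝ) * (x 0 * x 0 + x 1 * x 1) ≠ 0 := by positivity
  have hinv := (hasDerivAt_inv hne).comp_hasFDerivAt x h2Q
  have hE := (((hcoord 0 x).neg).mul hinv).exp
  have hnum := ((hcoord 0 x).mul (hcoord 0 x)).sub ((hcoord 1 x).mul (hcoord 1 x))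
  have h2QQ := (hQ.mul hQ).const_mul (2:ℝ)
  have hne2 : (2:ℝ) * ((x 0 * x 0 + x 1 * x 1) * (x 0 * x 0 + x 1 * x 1)) ≠ 0 := by positivity
  have hinv2 := (hasDerivAt_inv hne2).comp_hasFDerivAt x h2QQ
  refine ⟨_, hE.mul (hnum.mul hinv2), ?_⟩
  simp [ContinuousLinearMap.add_apply, ContinuousLinearMap.smul_apply,
    ContinuousLinearMap.neg_apply, PiLp.proj_apply, EuclideanSpace.single_apply,
    Function.comp]
  field_simp
  ring

set_option maxHeartbeats 2000000 in
lemma cderiv1 (x : Euc 2) (hx : x ≠ 0) :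
    ∃ L : Euc 2 →L[ℝ] ℝ, HasFDerivAt
      (fun y : Euc 2 => Real.exp (-(y 0) * (2 * (y 0 * y 0 + y 1 * y 1))⁻¹) *
        (y 0 * y 1 * ((y 0 * y 0 + y 1 * y 1) * (y 0 * y 0 + y 1 * y 1))⁻¹)) L x ∧
      L (EuclideanSpace.single 1 1) =
        Real.exp (-(x 0) * (2 * (x 0 * x 0 + x 1 * x 1))⁻¹) *
          ((x 0 * x 1 * ((x 0 * x 0 + x 1 * x 1) * (x 0 * x 0 + x 1 * x 1))⁻¹) *
           (x 0 * x 1 * ((x 0 * x 0 + x 1 * x 1) * (x 0 * x 0 + x 1 * x 1))⁻¹) +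
           (x 0 * (x 0 * x 0 + x 1 * x 1) - 4 * x 0 * (x 1 * x 1)) *
             ((x 0 * x 0 + x 1 * x 1) * (x 0 * x 0 + x 1 * x 1) * (x 0 * x 0 + x 1 * x 1))⁻¹) := by
  have hQy := Qne x hx
  have hQ : HasFDerivAt (fun z : Euc 2 => z 0 * z 0 + z 1 * z 1) _ x :=
    ((hcoord 0 x).mul (hcoord 0 x)).add ((hcoord 1 x).mul (hcoord 1 x))
  have h2Q := hQ.const_mul (2:ℝ)
  have hne : (2:ℝ) * (x 0 * x 0 + x 1 * x 1) ≠ 0 := by positivity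
  have hinv := (hasDerivAt_inv hne).comp_hasFDerivAt x h2Q
  have hE := (((hcoord 0 x).neg).mul hinv).exp
  have hnum := (hcoord 0 x).mul (hcoord 1 x)
  have hQQ := hQ.mul hQ
  have hne2 : (x 0 * x 0 + x 1 * x 1) * (x 0 * x 0 + x 1 * x 1) ≠ 0 := by positivity
  have hinv2 := (hasDerivAt_inv hne2).comp_hasFDerivAt x hQQ
  refine ⟨_, hE.mul (hnum.mul hinv2), ?_⟩
  simp [ContinuousLinearMap.add_apply, ContinuousLinearMap.smul_apply,
    ContinuousLinearMap.neg_apply, PiLp.proj_apply, EuclideanSpace.single_apply,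
    Function.comp]
  field_simp
  ring

set_option maxHeartbeats 2000000 in
lemma wderiv (c : ℝ) (y : Euc 2) :
    ∃ L : Euc 2 →L[ℝ] ℝ, HasFDerivAt (fun z : Euc 2 => c * Real.exp (-(z 0) / 2)) L y ∧
      (∀ i : Fin 2, L (EuclideanSpace.single i 1) =
        if i = 0 then c * Real.exp (-(y 0) / 2) * (-(1/2)) else 0) := by
  have h := (((hcoord 0 y).neg.mul_const (2⁻¹:ℝ)).exp).const_mul c
  refine ⟨_, h, ?_⟩
  intro i
  fin_cases i <;>
    simp [ContinuousLinearMap.add_apply, ContinuousLinearMap.smul_apply,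
      ContinuousLinearMap.neg_apply, PiLp.proj_apply, EuclideanSpace.single_apply,
      div_eq_mul_inv] <;> ring

set_option maxHeartbeats 2000000 in
lemma sderiv (c : ℝ) (x : Euc 2) :
    ∃ L : Euc 2 →L[ℝ] ℝ,
      HasFDerivAt (fun z : Euc 2 => c * Real.exp (-(z 0) / 2) * (-(1/2) : ℝ)) L x ∧
      L (EuclideanSpace.single 0 1) =
        c * Real.exp (-(x 0) / 2) * (-(1/2)) * (-(1/2)) := by
  have h := ((((hcoord 0 x).neg.mul_const (2⁻¹:ℝ)).exp).const_mul c).mul_const (-(1/2) : ℝ)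
  refine ⟨_, h, ?_⟩
  simp [ContinuousLinearMap.add_apply, ContinuousLinearMap.smul_apply,
    ContinuousLinearMap.neg_apply, PiLp.proj_apply, EuclideanSpace.single_apply,
    div_eq_mul_inv]
  ring

set_option maxHeartbeats 4000000 in
theorem stmt5 :
    (∀ ε : ℝ, 0 < ε →
      ∀ (w v : Euc 2 → ℝ),
        (w = fun x => (1+ε) * Real.exp (-(x 0)/2)) →
        (v = fun x => Real.exp (-(x 0) / (2 * ‖x‖^2))) →
        (∀ x, 0 < w x) ∧ (∀ x : Euc 2, x ≠ 0 → 0 < v x) ∧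
        (∀ x ∈ Metric.ball (0:Euc 2) 1,
          w x * (∑ i, hess w x i i) - ∑ i, (pd w x i)^2 = 0) ∧
        (∀ x ∈ Metric.ball (0:Euc 2) 1 \ {0},
          v x * (∑ i, hess v x i i) - ∑ i, (pd v x i)^2 = 0) ∧
        (∀ x ∈ Metric.sphere (0:Euc 2) 1, v x < w x)) ∧
    (∃ ε₀ > (0:ℝ), ∀ ε : ℝ, 0 < ε → ε < ε₀ →
      ∃ x ∈ Metric.ball (0:Euc 2) 1 \ {0},
        (1+ε) * Real.exp (-(x 0)/2) < Real.exp (-(x 0) / (2 * ‖x‖^2))) := by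
  constructor
  · intro ε hε w v hw hv
    subst hw hv
    have hveq : (fun x : Euc 2 => Real.exp (-(x 0) / (2 * ‖x‖^2))) =
        (fun z : Euc 2 => Real.exp (-(z 0) * (2 * (z 0 * z 0 + z 1 * z 1))⁻¹)) := by
      funext z; rw [normsq, div_eq_mul_inv]
    refine ⟨?_, ?_, ?_, ?_, ?_⟩
    · intro x
      have := Real.exp_pos (-(x 0)/2)
      nlinarith
    · intro x _
      exact Real.exp_pos _
    · -- w PDE
      intro x _
      obtain ⟨L, hL, hLi⟩ := wderiv (1+ε) x
      have hpd : ∀ (y : Euc 2) (i : Fin 2),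
          fderiv ℝ (fun z : Euc 2 => (1+ε) * Real.exp (-(z 0) / 2)) y
            (EuclideanSpace.single i 1) =
            if i = 0 then (1+ε) * Real.exp (-(y 0) / 2) * (-(1/2)) else 0 := by
        intro y i
        obtain ⟨L', hL', hLi'⟩ := wderiv (1+ε) y
        rw [hL'.fderiv, hLi' i]
      have h00 : hess (fun z : Euc 2 => (1+ε) * Real.exp (-(z 0)/2)) x 0 0 =
          (1+ε) * Real.exp (-(x 0) / 2) * (-(1/2)) * (-(1/2)) := by
        obtain ⟨L2, hL2, hL2e⟩ := sderiv (1+ε) x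
        have hfe : (fun y : Euc 2 => fderiv ℝ (fun z : Euc 2 => (1+ε) * Real.exp (-(z 0)/2)) y
            (EuclideanSpace.single (0:Fin 2) 1)) =
            (fun z : Euc 2 => (1+ε) * Real.exp (-(z 0) / 2) * (-(1/2) : ℝ)) := by
          funext y; rw [hpd y 0]; simp
        rw [hess, hfe, hL2.fderiv, hL2e]
      have h11 : hess (fun z : Euc 2 => (1+ε) * Real.exp (-(z 0)/2)) x 1 1 = 0 := by
        have hfe : (fun y : Euc 2 => fderiv ℝ (fun z : Euc 2 => (1+ε) * Real.exp (-(z 0)/2)) y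
            (EuclideanSpace.single (1:Fin 2) 1)) = (fun _ : Euc 2 => (0:ℝ)) := by
          funext y; rw [hpd y 1]; simp
        rw [hess, hfe, fderiv_const_apply]
        rfl
      have hp0 : pd (fun z : Euc 2 => (1+ε) * Real.exp (-(z 0)/2)) x 0 =
          (1+ε) * Real.exp (-(x 0) / 2) * (-(1/2)) := by
        rw [pd, hpd x 0]; simp
      have hp1 : pd (fun z : Euc 2 => (1+ε) * Real.exp (-(z 0)/2)) x 1 = 0 := by
        rw [pd, hpd x 1]; simp
      rw [Fin.sum_univ_two, Fin.sum_univ_two, h00, h11, hp0, hp1]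
      ring
    · -- v PDE
      intro x hx
      have hx0 : x ≠ 0 := fun h => hx.2 (by simp [h])
      have hQ := Qne x hx0
      rw [hveq]
      obtain ⟨L, hL, hLi⟩ := vderiv x hx0
      have hmem : {(0:Euc 2)}ᶜ ∈ nhds x := isOpen_compl_singleton.mem_nhds hx0
      have hev0 : (fun y : Euc 2 => fderiv ℝ
            (fun z : Euc 2 => Real.exp (-(z 0) * (2 * (z 0 * z 0 + z 1 * z 1))⁻¹)) y
            (EuclideanSpace.single (0:Fin 2) 1)) =ᶠ[nhds x]
          (fun y : Euc 2 => Real.exp (-(y 0) * (2 * (y 0 * y 0 + y 1 * y 1))⁻¹) *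
            ((y 0 * y 0 - y 1 * y 1) *
              (2 * ((y 0 * y 0 + y 1 * y 1) * (y 0 * y 0 + y 1 * y 1)))⁻¹)) := by
        filter_upwards [hmem] with y hy
        obtain ⟨L', hL', hLi'⟩ := vderiv y (by simpa using hy)
        rw [hL'.fderiv, hLi' 0]
        simp
      have hev1 : (fun y : Euc 2 => fderiv ℝ
            (fun z : Euc 2 => Real.exp (-(z 0) * (2 * (z 0 * z 0 + z 1 * z 1))⁻¹)) y
            (EuclideanSpace.single (1:Fin 2) 1)) =ᶠ[nhds x]
          (fun y : Euc 2 => Real.exp (-(y 0) * (2 * (y 0 * y 0 + y 1 * y 1))⁻¹) *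
            (y 0 * y 1 * ((y 0 * y 0 + y 1 * y 1) * (y 0 * y 0 + y 1 * y 1))⁻¹)) := by
        filter_upwards [hmem] with y hy
        obtain ⟨L', hL', hLi'⟩ := vderiv y (by simpa using hy)
        rw [hL'.fderiv, hLi' 1]
        simp
      obtain ⟨L0, hL0, hL0e⟩ := cderiv0 x hx0
      obtain ⟨L1, hL1, hL1e⟩ := cderiv1 x hx0
      have h00 : hess (fun z : Euc 2 => Real.exp (-(z 0) * (2 * (z 0 * z 0 + z 1 * z 1))⁻¹)) x 0 0 =
          Real.exp (-(x 0) * (2 * (x 0 * x 0 + x 1 * x 1))⁻¹) *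
          (((x 0 * x 0 - x 1 * x 1) * (2 * ((x 0 * x 0 + x 1 * x 1) * (x 0 * x 0 + x 1 * x 1)))⁻¹) *
           ((x 0 * x 0 - x 1 * x 1) * (2 * ((x 0 * x 0 + x 1 * x 1) * (x 0 * x 0 + x 1 * x 1)))⁻¹) +
           (x 0 * (x 0 * x 0 + x 1 * x 1) - 2 * x 0 * (x 0 * x 0 - x 1 * x 1)) *
             ((x 0 * x 0 + x 1 * x 1) * (x 0 * x 0 + x 1 * x 1) * (x 0 * x 0 + x 1 * x 1))⁻¹) := by
        rw [hess, hev0.fderiv_eq, hL0.fderiv, hL0e]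
      have h11 : hess (fun z : Euc 2 => Real.exp (-(z 0) * (2 * (z 0 * z 0 + z 1 * z 1))⁻¹)) x 1 1 =
          Real.exp (-(x 0) * (2 * (x 0 * x 0 + x 1 * x 1))⁻¹) *
          ((x 0 * x 1 * ((x 0 * x 0 + x 1 * x 1) * (x 0 * x 0 + x 1 * x 1))⁻¹) *
           (x 0 * x 1 * ((x 0 * x 0 + x 1 * x 1) * (x 0 * x 0 + x 1 * x 1))⁻¹) +
           (x 0 * (x 0 * x 0 + x 1 * x 1) - 4 * x 0 * (x 1 * x 1)) *
             ((x 0 * x 0 + x 1 * x 1) * (x 0 * x 0 + x 1 * x 1) * (x 0 * x 0 + x 1 * x 1))⁻¹) := by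
        rw [hess, hev1.fderiv_eq, hL1.fderiv, hL1e]
      have hp0 : pd (fun z : Euc 2 => Real.exp (-(z 0) * (2 * (z 0 * z 0 + z 1 * z 1))⁻¹)) x 0 =
          Real.exp (-(x 0) * (2 * (x 0 * x 0 + x 1 * x 1))⁻¹) *
            ((x 0 * x 0 - x 1 * x 1) *
              (2 * ((x 0 * x 0 + x 1 * x 1) * (x 0 * x 0 + x 1 * x 1)))⁻¹) := by
        rw [pd, hL.fderiv, hLi 0]; simp
      have hp1 : pd (fun z : Euc 2 => Real.exp (-(z 0) * (2 * (z 0 * z 0 + z 1 * z 1))⁻¹)) x 1 =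
          Real.exp (-(x 0) * (2 * (x 0 * x 0 + x 1 * x 1))⁻¹) *
            (x 0 * x 1 * ((x 0 * x 0 + x 1 * x 1) * (x 0 * x 0 + x 1 * x 1))⁻¹) := by
        rw [pd, hL.fderiv, hLi 1]; simp
      rw [Fin.sum_univ_two, Fin.sum_univ_two, h00, h11, hp0, hp1]
      have hEne := Real.exp_ne_zero (-(x 0) * (2 * (x 0 * x 0 + x 1 * x 1))⁻¹)
      field_simp
      ring
    · -- boundary
      intro x hxs
      have hn : ‖x‖ = 1 := mem_sphere_zero_iff_norm.mp hxs
      simp only [hn]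
      norm_num
      have := Real.exp_pos (-(x 0)/2)
      nlinarith
  · -- part 2
    refine ⟨1, one_pos, ?_⟩
    intro ε hε hε1
    refine ⟨EuclideanSpace.single (0:Fin 2) (-(1/2):ℝ), ⟨?_, ?_⟩, ?_⟩
    · rw [Metric.mem_ball, dist_zero_right, EuclideanSpace.norm_single]
      norm_num
    · simp only [Set.mem_singleton_iff]
      intro h
      have := congrArg (fun z : Euc 2 => z 0) h
      simp [EuclideanSpace.single_apply] at this
    · rw [EuclideanSpace.norm_single]
      simp only [EuclideanSpace.single_apply]
      norm_num
      have hxa : Real.exp (3/4) ^ 4 = Real.exp 3 := by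
        rw [← Real.exp_nat_mul]; norm_num
      have he3 : Real.exp 3 = Real.exp 1 ^ 3 := by
        rw [← Real.exp_nat_mul]; norm_num
      have h16 : (16:ℝ) < Real.exp 3 := by
        rw [he3]
        have h := Real.exp_one_gt_d9
        have h' : (2.7182818283:ℝ)^3 < Real.exp 1 ^ 3 :=
          pow_lt_pow_left₀ h (by norm_num) (by norm_num)
        nlinarith
      have h2 : (2:ℝ) < Real.exp (3/4) := by
        have : (2:ℝ)^4 < Real.exp (3/4)^4 := by rw [hxa]; norm_num [h16]
        exact lt_of_pow_lt_pow_left₀ 4 (Real.exp_nonneg _) this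
      have hsum : Real.exp (3/4) * Real.exp (4⁻¹) = Real.exp 1 := by
        rw [← Real.exp_add]; norm_num
      nlinarith [Real.exp_pos (4⁻¹ : ℝ), Real.exp_pos (1:ℝ)]
end
end

section
/- Let n ≥ 2, B ⊂ ℝⁿ a ball centered at the origin. Suppose u is C² and positive on the closed ball minus the origin with Δu = 0 in B∖{0}, v is C² on the closed ball with Δv = 0 in B, and u ≥ v on ∂B. Then u ≥ v in the closed ball minus the origin. -/
open scoped BigOperators
noncomputable section

/-- 1-D second derivative test at a local max. -/
lemma secondDeriv_nonpos_of_isLocalMax {g g' : ℝ → ℝ} {L : ℝ}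
    (hg : ∀ᶠ t in nhds (0:ℝ), HasDerivAt g (g' t) t)
    (hg' : HasDerivAt g' L 0) (hmax : IsLocalMax g 0) : L ≤ 0 := by
  by_contra hL
  push_neg at hL
  have h0 : g' 0 = 0 := by
    have := hmax.deriv_eq_zero
    rwa [hg.self_of_nhds.deriv] at this
  have hslope : Filter.Tendsto (fun t => g' t / t) (nhdsWithin 0 (Set.Ioi 0)) (nhds L) := by
    have := hasDerivAt_iff_tendsto_slope.1 hg'
    have h2 := this.mono_left (nhdsWithin_mono 0
      (by intro t ht; exact fun h => (ne_of_gt ht) h : Set.Ioi (0:ℝ) ⊆ {0}ᶜ))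
    refine h2.congr' ?_
    filter_upwards [self_mem_nhdsWithin] with t ht
    simp [slope_def_field, h0, div_eq_inv_mul]
  have hpos : ∀ᶠ t in nhdsWithin 0 (Set.Ioi 0), 0 < g' t := by
    have := hslope.eventually (eventually_gt_nhds hL : ∀ᶠ z in nhds L, 0 < z)
    filter_upwards [this, self_mem_nhdsWithin] with t ht ht'
    have htp : (0:ℝ) < t := ht'
    have := mul_pos ht htp
    rwa [div_mul_cancel₀ _ (ne_of_gt htp)] at this
  rw [eventually_nhdsWithin_iff] at hpos
  obtain ⟨ε1, hε1, hB1⟩ := Metric.eventually_nhds_iff.1 hpos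
  obtain ⟨ε2, hε2, hB2⟩ := Metric.eventually_nhds_iff.1 hg
  obtain ⟨ε3, hε3, hB3⟩ := Metric.eventually_nhds_iff.1 hmax
  set m := min ε1 (min ε2 ε3) with hmdef
  have hm0 : 0 < m := lt_min hε1 (lt_min hε2 hε3)
  have hm1 : m ≤ ε1 := min_le_left _ _
  have hm2 : m ≤ ε2 := (min_le_right _ _).trans (min_le_left _ _)
  have hm3 : m ≤ ε3 := (min_le_right _ _).trans (min_le_right _ _)
  set b := m / 2 with hb
  have hb0 : 0 < b := by positivity
  have hbd : ∀ t ∈ Set.Icc (0:ℝ) b, dist t 0 < m := by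
    intro t ht
    rw [Real.dist_eq, sub_zero, abs_of_nonneg ht.1]
    have := ht.2
    rw [hb] at this
    linarith
  have hcont : ContinuousOn g (Set.Icc 0 b) := by
    intro t ht
    exact (hB2 ((hbd t ht).trans_le hm2)).continuousAt.continuousWithinAt
  have hder : ∀ t ∈ Set.Ioo (0:ℝ) b, HasDerivAt g (g' t) t := by
    intro t ht
    exact hB2 ((hbd t ⟨le_of_lt ht.1, le_of_lt ht.2⟩).trans_le hm2)
  obtain ⟨c, hc, hceq⟩ := exists_hasDerivAt_eq_slope g g' hb0 hcont hder
  have hgb : g b ≤ g 0 := by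
    apply hB3
    have : dist b 0 < m := hbd b ⟨le_of_lt hb0, le_refl b⟩
    exact this.trans_le hm3
  have hcpos : 0 < g' c := by
    apply hB1
    · exact (hbd c ⟨le_of_lt hc.1, le_of_lt hc.2⟩).trans_le hm1
    · exact hc.1
  rw [hceq] at hcpos
  have : (g b - g 0) / (b - 0) ≤ 0 := by
    apply div_nonpos_of_nonpos_of_nonneg <;> [linarith; linarith]
  linarith

lemma hess_diag_nonpos_of_isLocalMax {n : ℕ} {f : Euc n → ℝ} {x : Euc n}
    (hf : ContDiffAt ℝ 2 f x) (hmax : IsLocalMax f x) (i : Fin n) : hess f x i i ≤ 0 := by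
  set e : Euc n := EuclideanSpace.single i 1 with he
  set ℓ : ℝ → Euc n := fun t => x + t • e with hℓ
  have hℓd : ∀ t : ℝ, HasDerivAt ℓ e t := by
    intro t
    have := ((hasDerivAt_id t).smul_const e).const_add x
    simpa [hℓ] using this
  have hℓ0 : ℓ 0 = x := by simp [hℓ]
  have hℓt : Filter.Tendsto ℓ (nhds 0) (nhds x) := by
    rw [← hℓ0]
    exact ((hℓd 0).continuousAt).tendsto
  have hev : ∀ᶠ y in nhds x, DifferentiableAt ℝ f y := by
    filter_upwards [hf.eventually (by norm_num)] with y hy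
    exact hy.differentiableAt (by norm_num)
  have hgg : ∀ᶠ t in nhds (0:ℝ), HasDerivAt (f ∘ ℓ) (fderiv ℝ f (ℓ t) e) t := by
    filter_upwards [hℓt.eventually hev] with t ht
    exact ht.hasFDerivAt.comp_hasDerivAt t (hℓd t)
  have h1 : ContDiffAt ℝ 1 (fderiv ℝ f) x := hf.fderiv_right (by norm_num)
  have h2 : DifferentiableAt ℝ (fderiv ℝ f) x := h1.differentiableAt one_ne_zero
  have h3 : DifferentiableAt ℝ (fun y => fderiv ℝ f y e) x :=
    ((ContinuousLinearMap.apply ℝ ℝ e).differentiableAt).comp x h2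
  have hg' : HasDerivAt (fun t => fderiv ℝ f (ℓ t) e) (hess f x i i) 0 := by
    have h4 : HasFDerivAt (fun y => fderiv ℝ f y e)
        (fderiv ℝ (fun y => fderiv ℝ f y e) x) (ℓ 0) := by
      rw [hℓ0]; exact h3.hasFDerivAt
    exact h4.comp_hasDerivAt 0 (hℓd 0)
  have hmaxg : IsLocalMax (f ∘ ℓ) 0 := by
    have := hℓt.eventually hmax
    simpa [IsLocalMax, IsMaxFilter, hℓ0] using this
  exact secondDeriv_nonpos_of_isLocalMax hgg hg' hmaxg

namespace Aux
variable {n : ℕ}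

def qf (y : Euc n) : ℝ := ∑ j, y j * y j
def Qd (y : Euc n) : Euc n →L[ℝ] ℝ := ∑ j, (2 * y j) • (EuclideanSpace.proj j : Euc n →L[ℝ] ℝ)

lemma proj_eval (i : Fin n) (y : Euc n) : (EuclideanSpace.proj i : Euc n →L[ℝ] ℝ) y = y i := rfl

lemma Qd_apply (y : Euc n) (i : Fin n) : Qd y (EuclideanSpace.single i 1) = 2 * y i := by
  simp [Qd, ContinuousLinearMap.sum_apply, proj_eval, EuclideanSpace.single_apply,
    Finset.sum_ite_eq]

lemma qf_hasFDerivAt (y : Euc n) : HasFDerivAt qf (Qd y) y := by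
  have : HasFDerivAt (fun z : Euc n => ∑ j, z j * z j)
      (∑ j, ((y j) • (EuclideanSpace.proj j : Euc n →L[ℝ] ℝ)
        + (y j) • (EuclideanSpace.proj j : Euc n →L[ℝ] ℝ))) y := by
    apply HasFDerivAt.fun_sum
    intro j _
    have hp : HasFDerivAt (fun z : Euc n => z j) (EuclideanSpace.proj j : Euc n →L[ℝ] ℝ) y :=
      (EuclideanSpace.proj j : Euc n →L[ℝ] ℝ).hasFDerivAt
    exact hp.mul hp
  convert this using 1
  · rfl
  rw [Qd]
  congr 1
  ext j
  rw [two_mul, add_smul]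

lemma qf_eq_norm (y : Euc n) : qf y = ‖y‖ ^ 2 := by
  rw [qf, EuclideanSpace.norm_eq, Real.sq_sqrt]
  · congr 1; ext j; rw [Real.norm_eq_abs, sq_abs]; ring
  · positivity

lemma qf_pos {y : Euc n} (hy : y ≠ 0) : 0 < qf y := by
  rw [qf_eq_norm]
  have : 0 < ‖y‖ := norm_pos_iff.2 hy
  positivity

lemma qf_contDiff : ContDiff ℝ 2 (qf (n := n)) := by
  apply ContDiff.sum
  intro j _
  have hp : ContDiff ℝ 2 (fun z : Euc n => z j) :=
    (EuclideanSpace.proj j : Euc n →L[ℝ] ℝ).contDiff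
  exact hp.mul hp

lemma qf_continuous : Continuous (qf (n := n)) := qf_contDiff.continuous

lemma hess_W {u v : Euc n → ℝ} (a b : ℝ) {x : Euc n} (hx : x ≠ 0)
    (hu2 : ContDiffAt ℝ 2 u x) (hv2 : ContDiffAt ℝ 2 v x) (i : Fin n) :
    hess (fun y => v y - u y + (a * Real.log (qf y) + b * qf y)) x i i
      = hess v x i i - hess u x i i
        + (a * (2 * (qf x)⁻¹ - 4 * (x i)^2 * ((qf x)^2)⁻¹) + 2 * b) := by
  set ei : Euc n := EuclideanSpace.single i 1 with hei
  set W : Euc n → ℝ := fun y => v y - u y + (a * Real.log (qf y) + b * qf y) with hW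
  set P : Euc n → ℝ := fun y =>
    fderiv ℝ v y ei - fderiv ℝ u y ei + (a * ((qf y)⁻¹ * (2 * y i)) + b * (2 * y i)) with hP
  have hlin : ∀ y : Euc n, HasFDerivAt (fun z : Euc n => 2 * z i)
      ((2:ℝ) • (EuclideanSpace.proj i : Euc n →L[ℝ] ℝ)) y := by
    intro y
    exact ((EuclideanSpace.proj i : Euc n →L[ℝ] ℝ).hasFDerivAt (x := y)).const_mul 2
  -- eventual equality of first derivatives
  have heq : (fun y => fderiv ℝ W y ei) =ᶠ[nhds x] P := by
    have hopen : ∀ᶠ y in nhds x, y ≠ 0 :=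
      (isOpen_compl_singleton (x := (0 : Euc n))).eventually_mem hx
    have hud : ∀ᶠ y in nhds x, DifferentiableAt ℝ u y := by
      filter_upwards [hu2.eventually (by norm_num)] with y hy
      exact hy.differentiableAt (by norm_num)
    have hvd : ∀ᶠ y in nhds x, DifferentiableAt ℝ v y := by
      filter_upwards [hv2.eventually (by norm_num)] with y hy
      exact hy.differentiableAt (by norm_num)
    filter_upwards [hopen, hud, hvd] with y hy hyu hyv
    have hqd := qf_hasFDerivAt y
    have hlog : HasFDerivAt (fun z => Real.log (qf z)) ((qf y)⁻¹ • Qd y) y :=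
      (Real.hasDerivAt_log (ne_of_gt (qf_pos hy))).comp_hasFDerivAt y hqd
    have hB : HasFDerivAt (fun z => a * Real.log (qf z) + b * qf z)
        (a • ((qf y)⁻¹ • Qd y) + b • Qd y) y := (hlog.const_mul a).add (hqd.const_mul b)
    have hWd : HasFDerivAt W ((fderiv ℝ v y - fderiv ℝ u y) + (a • ((qf y)⁻¹ • Qd y) + b • Qd y)) y :=
      (hyv.hasFDerivAt.sub hyu.hasFDerivAt).add hB
    rw [hWd.fderiv]
    simp only [hP, hei, ContinuousLinearMap.add_apply, ContinuousLinearMap.sub_apply,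
      ContinuousLinearMap.smul_apply, smul_eq_mul, Qd_apply]
  have hstep : hess W x i i = fderiv ℝ P x ei := by
    unfold hess
    rw [heq.fderiv_eq]
  rw [hstep]
  -- differentiability of the abstract parts
  have hA : DifferentiableAt ℝ (fun y => fderiv ℝ v y ei) x :=
    ((ContinuousLinearMap.apply ℝ ℝ ei).differentiableAt).comp x
      ((hv2.fderiv_right (m := 1) (by norm_num)).differentiableAt one_ne_zero)
  have hBd : DifferentiableAt ℝ (fun y => fderiv ℝ u y ei) x :=
    ((ContinuousLinearMap.apply ℝ ℝ ei).differentiableAt).comp x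
      ((hu2.fderiv_right (m := 1) (by norm_num)).differentiableAt one_ne_zero)
  -- explicit part
  have hinvq : HasFDerivAt (fun y => (qf y)⁻¹) ((-((qf x) ^ 2)⁻¹) • Qd x) x :=
    (hasDerivAt_inv (ne_of_gt (qf_pos hx))).comp_hasFDerivAt x (qf_hasFDerivAt x)
  have hprod : HasFDerivAt (fun y => (qf y)⁻¹ * (2 * y i))
      ((qf x)⁻¹ • ((2:ℝ) • (EuclideanSpace.proj i : Euc n →L[ℝ] ℝ))
        + (2 * x i) • ((-((qf x) ^ 2)⁻¹) • Qd x)) x := hinvq.mul (hlin x)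
  have hC : HasFDerivAt (fun y => a * ((qf y)⁻¹ * (2 * y i)) + b * (2 * y i))
      (a • ((qf x)⁻¹ • ((2:ℝ) • (EuclideanSpace.proj i : Euc n →L[ℝ] ℝ))
        + (2 * x i) • ((-((qf x) ^ 2)⁻¹) • Qd x)) + b • ((2:ℝ) • (EuclideanSpace.proj i : Euc n →L[ℝ] ℝ))) x :=
    (hprod.const_mul a).add ((hlin x).const_mul b)
  have : fderiv ℝ P x = fderiv ℝ (fun y => fderiv ℝ v y ei) x
      - fderiv ℝ (fun y => fderiv ℝ u y ei) x
      + (a • ((qf x)⁻¹ • ((2:ℝ) • (EuclideanSpace.proj i : Euc n →L[ℝ] ℝ))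
        + (2 * x i) • ((-((qf x) ^ 2)⁻¹) • Qd x)) + b • ((2:ℝ) • (EuclideanSpace.proj i : Euc n →L[ℝ] ℝ))) := by
    rw [hP]
    rw [fderiv_fun_add (hA.fun_sub hBd) hC.differentiableAt, fderiv_fun_sub hA hBd, hC.fderiv]
  rw [this]
  have hev : hess v x i i = fderiv ℝ (fun y => fderiv ℝ v y ei) x ei := rfl
  have heu : hess u x i i = fderiv ℝ (fun y => fderiv ℝ u y ei) x ei := rfl
  simp only [hei, ContinuousLinearMap.add_apply, ContinuousLinearMap.sub_apply,
    ContinuousLinearMap.smul_apply, smul_eq_mul, Qd_apply, hev, heu]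
  have hproj : (EuclideanSpace.proj i : Euc n →L[ℝ] ℝ) ei = 1 := by
    rw [proj_eval, hei]
    simp [EuclideanSpace.single_apply]
  rw [hproj]
  ring

lemma sum_hess_W {u v : Euc n → ℝ} (a b : ℝ) {x : Euc n} (hx : x ≠ 0)
    (hu2 : ContDiffAt ℝ 2 u x) (hv2 : ContDiffAt ℝ 2 v x) :
    ∑ i, hess (fun y => v y - u y + (a * Real.log (qf y) + b * qf y)) x i i
      = ∑ i, hess v x i i - ∑ i, hess u x i i
        + (a * (2*(n:ℝ) - 4) * (qf x)⁻¹ + 2 * n * b) := by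
  rw [Finset.sum_congr rfl (fun i _ => hess_W a b hx hu2 hv2 i)]
  rw [Finset.sum_add_distrib, Finset.sum_sub_distrib]
  congr 1
  have hq := (qf_pos hx).ne'
  have hsq : ∑ i, (x i)^2 = qf x := by
    rw [qf]; apply Finset.sum_congr rfl; intro i _; ring
  rw [Finset.sum_add_distrib, ← Finset.mul_sum, Finset.sum_sub_distrib, Finset.sum_const,
    Finset.card_univ, Fintype.card_fin, nsmul_eq_mul]
  have h4 : ∑ i : Fin n, 4 * (x i)^2 * ((qf x)^2)⁻¹ = 4 * qf x * ((qf x)^2)⁻¹ := by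
    rw [← Finset.sum_mul, ← Finset.mul_sum, hsq]
  rw [h4]
  field_simp
  simp only [Finset.sum_const, Finset.card_univ, Fintype.card_fin, nsmul_eq_mul]
  ring

lemma W_contDiffAt {u v : Euc n → ℝ} (a b : ℝ) {x : Euc n} (hx : x ≠ 0)
    (hu2 : ContDiffAt ℝ 2 u x) (hv2 : ContDiffAt ℝ 2 v x) :
    ContDiffAt ℝ 2 (fun y => v y - u y + (a * Real.log (qf y) + b * qf y)) x := by
  have hlog : ContDiffAt ℝ 2 (fun y : Euc n => Real.log (qf y)) x :=
    (Real.contDiffAt_log.2 (qf_pos hx).ne').comp x qf_contDiff.contDiffAt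
  exact (hv2.sub hu2).add (((contDiffAt_const.mul hlog)).add
    (contDiffAt_const.mul qf_contDiff.contDiffAt))

lemma maxprin {r R : ℝ} (hr : 0 < r) (hrR : r < R) (w : Euc n → ℝ) (M : ℝ)
    (hwc : ContinuousOn w (Metric.closedBall 0 R \ Metric.ball 0 r))
    (hw2 : ∀ y : Euc n, r < ‖y‖ → ‖y‖ < R → ContDiffAt ℝ 2 w y)
    (hsub : ∀ y : Euc n, r < ‖y‖ → ‖y‖ < R → 0 < ∑ i, hess w y i i)
    (hbdy : ∀ y : Euc n, ‖y‖ = r ∨ ‖y‖ = R → w y ≤ M) :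
    ∀ x : Euc n, r ≤ ‖x‖ → ‖x‖ ≤ R → w x ≤ M := by
  intro x hx1 hx2
  set A := Metric.closedBall (0:Euc n) R \ Metric.ball 0 r with hA
  have hxA : x ∈ A := ⟨mem_closedBall_zero_iff.2 hx2,
    fun h => absurd (mem_ball_zero_iff.1 h) (not_lt.2 hx1)⟩
  have hAc : IsCompact A := (isCompact_closedBall 0 R).diff Metric.isOpen_ball
  obtain ⟨z, hzA, hz⟩ := hAc.exists_isMaxOn ⟨x, hxA⟩ hwc
  have hz1 : r ≤ ‖z‖ := not_lt.1 (fun h => hzA.2 (mem_ball_zero_iff.2 h))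
  have hz2 : ‖z‖ ≤ R := mem_closedBall_zero_iff.1 hzA.1
  by_cases hcase : r < ‖z‖ ∧ ‖z‖ < R
  · exfalso
    have hS : IsOpen {y : Euc n | r < ‖y‖ ∧ ‖y‖ < R} :=
      (isOpen_lt continuous_const continuous_norm).inter
        (isOpen_lt continuous_norm continuous_const)
    have hSA : {y : Euc n | r < ‖y‖ ∧ ‖y‖ < R} ⊆ A := fun y hy =>
      ⟨mem_closedBall_zero_iff.2 hy.2.le,
       fun h => absurd (mem_ball_zero_iff.1 h) (not_lt.2 hy.1.le)⟩
    have hlm : IsLocalMax w z := hz.isLocalMax (Filter.mem_of_superset (hS.mem_nhds hcase) hSA)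
    have hpos := hsub z hcase.1 hcase.2
    have hle : ∑ i, hess w z i i ≤ 0 := Finset.sum_nonpos fun i _ =>
      hess_diag_nonpos_of_isLocalMax (hw2 z hcase.1 hcase.2) hlm i
    linarith
  · have hzb : ‖z‖ = r ∨ ‖z‖ = R := by
      rw [not_and_or, not_lt, not_lt] at hcase
      rcases hcase with h | h
      · exact Or.inl (le_antisymm h hz1)
      · exact Or.inr (le_antisymm hz2 h)
    exact (hz hxA).trans (hbdy z hzb)
end Aux

lemma squeeze {A C1 C2 : ℝ} (hC1 : 0 ≤ C1) (hC2 : 0 ≤ C2)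
    (h : ∀ a : ℝ, 0 < a → ∀ b : ℝ, 0 < b → A ≤ a * C1 + b * C2) : A ≤ 0 := by
  by_contra hlt
  push_neg at hlt
  have hkey := h (A/(2*(C1+1))) (by positivity) (A/(2*(C2+1))) (by positivity)
  have h1 : A/(2*(C1+1)) * C1 < A/2 := by
    rw [div_mul_eq_mul_div, div_lt_div_iff₀ (by positivity) two_pos]
    nlinarith
  have h2 : A/(2*(C2+1)) * C2 < A/2 := by
    rw [div_mul_eq_mul_div, div_lt_div_iff₀ (by positivity) two_pos]
    nlinarith
  linarith

theorem stmt6 (n : ℕ) (hn : 2 ≤ n) (R : ℝ) (hR : 0 < R)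
    (u v : Euc n → ℝ)
    (hu : ContDiffOn ℝ 2 u (Metric.closedBall 0 R \ {0}))
    (hupos : ∀ x ∈ Metric.closedBall (0:Euc n) R \ {0}, 0 < u x)
    (huh : ∀ x ∈ Metric.ball (0:Euc n) R \ {0}, ∑ i, hess u x i i = 0)
    (hv : ContDiffOn ℝ 2 v (Metric.closedBall 0 R))
    (hvh : ∀ x ∈ Metric.ball (0:Euc n) R, ∑ i, hess v x i i = 0)
    (hbd : ∀ x ∈ Metric.sphere (0:Euc n) R, v x ≤ u x) :
    ∀ x ∈ Metric.closedBall (0:Euc n) R \ {0}, v x ≤ u x := by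
  obtain ⟨ym, hymmem, hym⟩ := (isCompact_closedBall (0:Euc n) R).exists_isMaxOn
    ⟨0, Metric.mem_closedBall_self hR.le⟩ hv.continuousOn
  set Mv := v ym with hMvdef
  have hvle : ∀ y ∈ Metric.closedBall (0:Euc n) R, v y ≤ Mv := fun y hy => hym hy
  intro x hx
  obtain ⟨hx1, hx2⟩ := hx
  have hxne : x ≠ 0 := by simpa using hx2
  have hs0 : 0 < ‖x‖ := norm_pos_iff.2 hxne
  have hsR : ‖x‖ ≤ R := mem_closedBall_zero_iff.1 hx1
  have hn' : (2:ℝ) ≤ (n:ℝ) := by exact_mod_cast hn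
  have key : ∀ a : ℝ, 0 < a → ∀ b : ℝ, 0 < b →
      v x - u x ≤ a * (Real.log (R^2) - Real.log (Aux.qf x)) + b * (R^2 - Aux.qf x) := by
    intro a ha b hb
    set c : ℝ := (|Mv|+1)/(2*a) with hcdef
    have hc0 : 0 < c := by positivity
    set r : ℝ := min (‖x‖/2) (R * Real.exp (-c)) with hrdef
    have hr0 : 0 < r := lt_min (by positivity) (by positivity)
    have hrx : r < ‖x‖ := (min_le_left _ _).trans_lt (by linarith)
    have hrR : r < R := by
      have h1 : r ≤ R * Real.exp (-c) := min_le_right _ _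
      have h2 : Real.exp (-c) < 1 := Real.exp_lt_one_iff.2 (by linarith)
      nlinarith
    set W : Euc n → ℝ := fun y => v y - u y + (a * Real.log (Aux.qf y) + b * Aux.qf y) with hWdef
    set M : ℝ := a * Real.log (R^2) + b * R^2 with hMdef
    have hsubset : Metric.closedBall (0:Euc n) R \ Metric.ball 0 r ⊆
        Metric.closedBall (0:Euc n) R \ {0} := by
      intro z hz
      refine ⟨hz.1, ?_⟩
      simp only [Set.mem_singleton_iff]
      intro h0
      exact hz.2 (by simpa [h0] using hr0)
    have hWx : W x ≤ M := by
      apply Aux.maxprin hr0 hrR W M ?_ ?_ ?_ ?_ x hrx.le hsR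
      · -- continuity
        intro y hy
        have hyne : y ≠ 0 := fun h0 => hy.2 (by simpa [h0] using hr0)
        have h1 : ContinuousWithinAt v (Metric.closedBall 0 R \ Metric.ball 0 r) y :=
          (hv.continuousOn.mono Set.diff_subset) y hy
        have h2 : ContinuousWithinAt u (Metric.closedBall 0 R \ Metric.ball 0 r) y :=
          (hu.continuousOn.mono hsubset) y hy
        have h3 : ContinuousAt (fun z : Euc n => a * Real.log (Aux.qf z) + b * Aux.qf z) y := by
          have hq : ContinuousAt (Aux.qf (n := n)) y := Aux.qf_contDiff.continuous.continuousAt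
          have hl : ContinuousAt (fun z : Euc n => Real.log (Aux.qf z)) y :=
            (Real.continuousAt_log (Aux.qf_pos hyne).ne').comp hq
          exact (continuousAt_const.mul hl).add (continuousAt_const.mul hq)
        exact (h1.sub h2).add h3.continuousWithinAt
      · -- C2
        intro y h1 h2
        have hyne : y ≠ 0 := norm_pos_iff.1 (hr0.trans h1)
        have hu2 : ContDiffAt ℝ 2 u y := hu.contDiffAt (Filter.mem_of_superset
          ((Metric.isOpen_ball.inter isOpen_compl_singleton).mem_nhds
            ⟨mem_ball_zero_iff.2 h2, hyne⟩)
          (fun z hz => ⟨Metric.ball_subset_closedBall hz.1, hz.2⟩))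
        have hv2 : ContDiffAt ℝ 2 v y := hv.contDiffAt (Filter.mem_of_superset
          (Metric.isOpen_ball.mem_nhds (mem_ball_zero_iff.2 h2)) Metric.ball_subset_closedBall)
        exact Aux.W_contDiffAt a b hyne hu2 hv2
      · -- subharmonic
        intro y h1 h2
        have hyne : y ≠ 0 := norm_pos_iff.1 (hr0.trans h1)
        have hu2 : ContDiffAt ℝ 2 u y := hu.contDiffAt (Filter.mem_of_superset
          ((Metric.isOpen_ball.inter isOpen_compl_singleton).mem_nhds
            ⟨mem_ball_zero_iff.2 h2, hyne⟩)
          (fun z hz => ⟨Metric.ball_subset_closedBall hz.1, hz.2⟩))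
        have hv2 : ContDiffAt ℝ 2 v y := hv.contDiffAt (Filter.mem_of_superset
          (Metric.isOpen_ball.mem_nhds (mem_ball_zero_iff.2 h2)) Metric.ball_subset_closedBall)
        rw [Aux.sum_hess_W a b hyne hu2 hv2]
        rw [huh y ⟨mem_ball_zero_iff.2 h2, by simpa using hyne⟩,
            hvh y (mem_ball_zero_iff.2 h2)]
        have hqi : 0 < (Aux.qf y)⁻¹ := inv_pos.2 (Aux.qf_pos hyne)
        have h24 : 0 ≤ 2*(n:ℝ) - 4 := by linarith
        have hnb : 0 < 2 * (n:ℝ) * b := by positivity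
        nlinarith [mul_nonneg (mul_nonneg ha.le h24) hqi.le]
      · -- boundary
        intro y hy
        rcases hy with hyr | hyR
        · have hyne : y ≠ 0 := norm_pos_iff.1 (hyr ▸ hr0)
          have hyc : y ∈ Metric.closedBall (0:Euc n) R :=
            mem_closedBall_zero_iff.2 (by rw [hyr]; exact hrR.le)
          have hvy : v y ≤ Mv := hvle y hyc
          have huy : 0 < u y := hupos y ⟨hyc, by simpa using hyne⟩
          have hqy : Aux.qf y = r^2 := by rw [Aux.qf_eq_norm, hyr]
          have hlogr : Real.log r ≤ Real.log R - c := by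
            have := (Real.log_le_log_iff hr0 (by positivity)).2
              (min_le_right (‖x‖/2) (R * Real.exp (-c)))
            rwa [Real.log_mul hR.ne' (Real.exp_ne_zero _), Real.log_exp] at this
          have hlq : Real.log (Aux.qf y) = 2 * Real.log r := by
            rw [hqy, Real.log_pow]; norm_num
          have hbr : b * Aux.qf y ≤ b * R^2 := by
            rw [hqy]
            have hr2 : r^2 ≤ R^2 := by nlinarith [hr0, hrR]
            nlinarith
          have hlogR2 : Real.log (R^2) = 2 * Real.log R := by
            rw [Real.log_pow]; norm_num
          have hac : a * c = (|Mv|+1)/2 := by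
            rw [hcdef]; field_simp
          have habs : Mv ≤ |Mv| := le_abs_self Mv
          simp only [hWdef, hMdef]
          have : a * Real.log (Aux.qf y) ≤ a * Real.log (R^2) - (|Mv|+1) := by
            rw [hlq, hlogR2]
            nlinarith
          linarith
        · have hyS : y ∈ Metric.sphere (0:Euc n) R := by
            rwa [mem_sphere_zero_iff_norm]
          have hqy : Aux.qf y = R^2 := by rw [Aux.qf_eq_norm, hyR]
          have := hbd y hyS
          simp only [hWdef, hMdef, hqy]
          linarith
    simp only [hWdef, hMdef] at hWx
    linarith
  -- conclude
  have hqx : Aux.qf x ≤ R^2 := by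
    rw [Aux.qf_eq_norm]; nlinarith
  have hq0 : 0 < Aux.qf x := Aux.qf_pos hxne
  have hC1 : 0 ≤ Real.log (R^2) - Real.log (Aux.qf x) := by
    have := (Real.log_le_log_iff hq0 (by positivity)).2 hqx
    linarith
  have hC2 : 0 ≤ R^2 - Aux.qf x := by linarith
  have := squeeze hC1 hC2 key
  linarith
end
end

section
/- Let n ≥ 1 and u be a continuous positive function on ℝⁿ such that for every x ∈ ℝⁿ, every λ > 0, and every y with |y - x| ≥ λ, one has (λ/|y-x|)^{n-2}·u(x + λ²(y-x)/|y-x|²) ≤ u(y). Then u is constant. -/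
open scoped BigOperators
noncomputable section

theorem stmt8 (n : ℕ) (hn : 1 ≤ n) (u : Euc n → ℝ)
    (hc : Continuous u) (hpos : ∀ x, 0 < u x)
    (h : ∀ (x : Euc n) (lam : ℝ) (y : Euc n), 0 < lam → lam ≤ ‖y - x‖ →
      (lam / ‖y - x‖) ^ ((n:ℝ) - 2) * u (x + (lam^2 / ‖y - x‖^2) • (y - x)) ≤ u y) :
    ∀ y z : Euc n, u y = u z := by
  have key : ∀ y z : Euc n, u z ≤ u y := by
    intro y z
    rcases eq_or_ne y z with rfl | hyz
    · exact le_refl _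
    have hd : 0 < ‖z - y‖ := by
      rw [norm_sub_pos_iff]; exact fun hh => hyz hh.symm
    set d := ‖z - y‖ with hdef
    have main : ∀ s : ℝ, 0 < s →
        (Real.sqrt (s / (1 + s))) ^ ((n:ℝ) - 2) * u z ≤ u y := by
      intro s hs
      have h1s : 0 < 1 + s := by linarith
      set x : Euc n := z + s • (z - y) with hx
      have hyx : y - x = (-(1 + s)) • (z - y) := by rw [hx]; module
      have hnyx : ‖y - x‖ = (1 + s) * d := by
        rw [hyx, norm_smul, Real.norm_eq_abs, abs_neg, abs_of_pos h1s]
      set lam := d * Real.sqrt (s * (1 + s)) with hlam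
      have hsprod : 0 < s * (1 + s) := mul_pos hs h1s
      have hlampos : 0 < lam := mul_pos hd (Real.sqrt_pos.mpr hsprod)
      have hlamle : lam ≤ ‖y - x‖ := by
        rw [hnyx, hlam]
        have hsq : Real.sqrt (s * (1 + s)) ≤ Real.sqrt ((1 + s) ^ 2) :=
          Real.sqrt_le_sqrt (by nlinarith)
        rw [Real.sqrt_sq h1s.le] at hsq
        nlinarith
      have h2 := h x lam y hlampos hlamle
      have hscal : lam ^ 2 / ‖y - x‖ ^ 2 = s / (1 + s) := by
        rw [hnyx, hlam, mul_pow, Real.sq_sqrt hsprod.le]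
        field_simp
      have hpt : x + (lam ^ 2 / ‖y - x‖ ^ 2) • (y - x) = z := by
        rw [hscal, hyx, smul_smul,
          show s / (1 + s) * (-(1 + s)) = -s by field_simp, hx]
        module
      have hratio : lam / ‖y - x‖ = Real.sqrt (s / (1 + s)) := by
        rw [hnyx, hlam, Real.sqrt_div hs.le, Real.sqrt_mul hs.le]
        have hsq : 0 < Real.sqrt (1 + s) := Real.sqrt_pos.mpr h1s
        rw [show (1 + s) = Real.sqrt (1 + s) * Real.sqrt (1 + s) by
          rw [Real.mul_self_sqrt h1s.le]]
        field_simp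
        rw [Real.sqrt_sq hsq.le, Real.sq_sqrt h1s.le]
      rw [hpt, hratio] at h2
      exact h2
    have h0 : Filter.Tendsto (fun s : ℝ => s / (1 + s)) Filter.atTop (nhds 1) := by
      have hcong : (fun s : ℝ => s / (1 + s)) =ᶠ[Filter.atTop]
          (fun s : ℝ => 1 - (1 + s)⁻¹) := by
        filter_upwards [Filter.eventually_gt_atTop 0] with s hs
        have h1s : (1 : ℝ) + s ≠ 0 := by positivity
        field_simp
        ring
      rw [Filter.tendsto_congr' hcong]
      have hinv : Filter.Tendsto (fun s : ℝ => (1 + s)⁻¹) Filter.atTop (nhds 0) :=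
        tendsto_inv_atTop_zero.comp (Filter.tendsto_atTop_add_const_left _ 1 Filter.tendsto_id)
      have := Filter.Tendsto.sub (tendsto_const_nhds (α := ℝ) (x := 1)) hinv
      simpa using this
    have hlim : Filter.Tendsto
        (fun s : ℝ => (Real.sqrt (s / (1 + s))) ^ ((n:ℝ) - 2) * u z)
        Filter.atTop (nhds (u z)) := by
      have hsqrt : Filter.Tendsto (fun s : ℝ => Real.sqrt (s / (1 + s)))
          Filter.atTop (nhds 1) := by
        have := (Real.continuous_sqrt.tendsto 1).comp h0
        simpa [Function.comp_def] using this
      have hrpow : Filter.Tendsto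
          (fun s : ℝ => (Real.sqrt (s / (1 + s))) ^ ((n:ℝ) - 2))
          Filter.atTop (nhds 1) := by
        have hcont : ContinuousAt (fun t : ℝ => t ^ ((n:ℝ) - 2)) 1 :=
          Real.continuousAt_rpow_const 1 _ (Or.inl one_ne_zero)
        have := hcont.tendsto.comp hsqrt
        simpa [Function.comp_def] using this
      have := hrpow.mul (tendsto_const_nhds (x := u z))
      simpa using this
    have hev : ∀ᶠ s in Filter.atTop,
        (Real.sqrt (s / (1 + s))) ^ ((n:ℝ) - 2) * u z ≤ u y := by
      filter_upwards [Filter.eventually_gt_atTop 0] with s hs using main s hs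
    exact le_of_tendsto hlim hev
  intro y z
  exact le_antisymm (key z y) (key y z)
end
end

section
/- Let n ≥ 3 and u be a continuous positive function on ℝⁿ∖{0} such that for every x ≠ 0, every 0 < λ < |x|, and every y ≠ 0 with |y - x| ≥ λ, one has (λ/|y-x|)^{n-2}·u(x + λ²(y-x)/|y-x|²) ≤ u(y). Then u is radially symmetric about the origin, and the resulting radial function is non-increasing in r. -/
open scoped BigOperators
noncomputable section

open Filter in
lemma sqrt_ratio_tendsto (c d : ℝ) (hd : 0 ≤ d) :
    Filter.Tendsto (fun k : ℕ => (Real.sqrt (((k:ℝ)+1)/(((k:ℝ)+1)+d))) ^ c) atTop (nhds 1) := by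
  have h0 : Tendsto (fun k : ℕ => d/(((k:ℝ)+1)+d)) atTop (nhds 0) := by
    apply Filter.Tendsto.div_atTop tendsto_const_nhds
    have := tendsto_atTop_add_const_right atTop (1+d) (tendsto_natCast_atTop_atTop (R := ℝ))
    simpa [add_assoc] using this
  have h1 : Tendsto (fun k : ℕ => 1 - d/(((k:ℝ)+1)+d)) atTop (nhds 1) := by
    simpa using (tendsto_const_nhds (x := (1:ℝ)) (f := atTop)).sub h0
  have h3 : Tendsto (fun k : ℕ => ((k:ℝ)+1)/(((k:ℝ)+1)+d)) atTop (nhds 1) := by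
    refine h1.congr fun k => ?_
    have hk : ((k:ℝ)+1)+d ≠ 0 := by positivity
    field_simp
    ring
  have h4 : Tendsto (fun k : ℕ => Real.sqrt (((k:ℝ)+1)/(((k:ℝ)+1)+d))) atTop (nhds 1) := by
    simpa using h3.sqrt
  simpa using h4.rpow_const (p := c) (Or.inl one_ne_zero)

open Filter in
lemma le_of_coeff (A B : ℝ) (c : ℕ → ℝ) (h1 : Tendsto c atTop (nhds 1))
    (h2 : ∀ k, c k * A ≤ B) : A ≤ B := by
  have : Tendsto (fun k => c k * A) atTop (nhds A) := by simpa using h1.mul_const A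
  exact le_of_tendsto this (Filter.Eventually.of_forall h2)

lemma part1_le (n : ℕ) (u : Euc n → ℝ)
    (h : ∀ x : Euc n, x ≠ 0 → ∀ lam : ℝ, 0 < lam → lam < ‖x‖ →
      ∀ y : Euc n, y ≠ 0 → lam ≤ ‖y - x‖ →
      (lam / ‖y - x‖) ^ ((n:ℝ) - 2) * u (x + (lam^2 / ‖y - x‖^2) • (y - x)) ≤ u y)
    (y z : Euc n) (hy : y ≠ 0) (hz : z ≠ 0) (hyz : ‖y‖ = ‖z‖) : u y ≤ u z := by
  rcases eq_or_ne y z with rfl | hne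
  · exact le_refl _
  set d : Euc n := y - z with hd_def
  have hd : d ≠ 0 := sub_ne_zero.mpr hne
  have hdn : (0:ℝ) < ‖d‖ := norm_pos_iff.mpr hd
  refine le_of_coeff _ _ _ (sqrt_ratio_tendsto ((n:ℝ)-2) 1 zero_le_one) fun k => ?_
  set s : ℝ := (k:ℝ) + 1 with hs_def
  have hs : (0:ℝ) < s := by positivity
  set x : Euc n := y + s • d with hx_def
  set lam : ℝ := Real.sqrt (s*(s+1)) * ‖d‖ with hlam_def
  have hss : (0:ℝ) < s*(s+1) := by nlinarith
  have hlam_pos : 0 < lam := mul_pos (Real.sqrt_pos.mpr hss) hdn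
  have hlam2 : lam^2 = s*(s+1)*‖d‖^2 := by
    rw [hlam_def, mul_pow, Real.sq_sqrt hss.le]
  have hzx : z - x = (-(s+1)) • d := by rw [hx_def, hd_def]; module
  have hnzx : ‖z - x‖ = (s+1)*‖d‖ := by
    rw [hzx, norm_smul]
    have : ‖(-(s+1))‖ = s+1 := by rw [Real.norm_eq_abs, abs_neg, abs_of_pos (by linarith)]
    rw [this]
  -- norm of x
  have hxsq : ‖x‖^2 = ‖y‖^2 + lam^2 := by
    have e1 : ‖x‖^2 = ‖y‖^2 + 2*inner ℝ y (s • d) + ‖s • d‖^2 := by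
      rw [hx_def]; exact norm_add_sq_real y (s • d)
    have e2 : (inner ℝ y (s • d) : ℝ) = s * (‖y‖^2 - inner ℝ y z) := by
      rw [real_inner_smul_right, hd_def, inner_sub_right, real_inner_self_eq_norm_sq]
    have e3 : ‖d‖^2 = ‖y‖^2 - 2*inner ℝ y z + ‖z‖^2 := by
      rw [hd_def, norm_sub_sq_real]
    have e4 : ‖s • d‖^2 = s^2 * ‖d‖^2 := by
      rw [norm_smul, mul_pow, Real.norm_eq_abs, sq_abs]
    have hyz2 : ‖y‖^2 = ‖z‖^2 := by rw [hyz]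
    have hD : ‖d‖^2 = 2*(‖y‖^2 - inner ℝ y z) := by rw [e3]; linarith
    rw [e1, e2, e4, hlam2, hD]; ring
  have hx0 : x ≠ 0 := by
    intro h0
    rw [h0] at hxsq; simp at hxsq
    nlinarith [norm_pos_iff.mpr hy, sq_nonneg lam]
  have hlam_lt : lam < ‖x‖ := by
    apply lt_of_pow_lt_pow_left₀ 2 (norm_nonneg x)
    nlinarith [norm_pos_iff.mpr hy]
  have hlam_le : lam ≤ ‖z - x‖ := by
    apply le_of_pow_le_pow_left₀ two_ne_zero (by rw [hnzx]; positivity)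
    rw [hnzx, hlam2]; nlinarith
  have himg : x + (lam^2 / ‖z - x‖^2) • (z - x) = y := by
    rw [hnzx, hlam2, hzx, hx_def]
    have h1 : s + 1 ≠ 0 := by positivity
    have h2 : ‖d‖ ≠ 0 := ne_of_gt hdn
    match_scalars
    all_goals field_simp
    all_goals ring
  have hratio : lam / ‖z - x‖ = Real.sqrt (((k:ℝ)+1)/(((k:ℝ)+1)+1)) := by
    have hq : (lam / ‖z - x‖)^2 = ((k:ℝ)+1)/(((k:ℝ)+1)+1) := by
      rw [div_pow, hlam2, hnzx, mul_pow]
      have h1 : s + 1 ≠ 0 := by positivity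
      have h2 : ‖d‖ ≠ 0 := ne_of_gt hdn
      rw [hs_def]
      field_simp
    rw [← hq, Real.sqrt_sq (by positivity)]
  have := h x hx0 lam hlam_pos hlam_lt z hz hlam_le
  rw [himg, hratio] at this
  exact this

set_option maxHeartbeats 1000000 in
lemma part2_le (n : ℕ) (hn : 3 ≤ n) (u : Euc n → ℝ)
    (h : ∀ x : Euc n, x ≠ 0 → ∀ lam : ℝ, 0 < lam → lam < ‖x‖ →
      ∀ y : Euc n, y ≠ 0 → lam ≤ ‖y - x‖ →
      (lam / ‖y - x‖) ^ ((n:ℝ) - 2) * u (x + (lam^2 / ‖y - x‖^2) • (y - x)) ≤ u y)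
    (hrad : ∀ y z : Euc n, y ≠ 0 → z ≠ 0 → ‖y‖ = ‖z‖ → u y = u z)
    (y z : Euc n) (hy : y ≠ 0) (hz : z ≠ 0) (hyz : ‖y‖ ≤ ‖z‖) : u z ≤ u y := by
  have hn0 : 0 < n := by omega
  set e : Euc n := EuclideanSpace.single (⟨0, hn0⟩ : Fin n) (1:ℝ) with he_def
  have hne : ‖e‖ = 1 := by rw [he_def, EuclideanSpace.norm_single]; norm_num
  set r : ℝ := ‖y‖ with hr_def
  set ρ : ℝ := ‖z‖ with hρ_def
  have hr : 0 < r := norm_pos_iff.mpr hy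
  have hρ : 0 < ρ := norm_pos_iff.mpr hz
  set p : Euc n := r • e with hp_def
  set w : Euc n := ρ • e with hw_def
  have hnp : ‖p‖ = r := by rw [hp_def, norm_smul, hne, Real.norm_eq_abs, abs_of_pos hr, mul_one]
  have hnw : ‖w‖ = ρ := by rw [hw_def, norm_smul, hne, Real.norm_eq_abs, abs_of_pos hρ, mul_one]
  have hp0 : p ≠ 0 := by intro h0; rw [h0] at hnp; simp at hnp; exact absurd hnp.symm (ne_of_gt hr)
  have hw0 : w ≠ 0 := by intro h0; rw [h0] at hnw; simp at hnw; exact absurd hnw.symm (ne_of_gt hρ)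
  have hup : u p = u y := hrad p y hp0 hy (by rw [hnp])
  have huw : u w = u z := hrad w z hw0 hz (by rw [hnw])
  rw [← hup, ← huw]
  refine le_of_coeff _ _ _ (sqrt_ratio_tendsto ((n:ℝ)-2) (ρ - r) (by linarith)) fun k => ?_
  set R : ℝ := ρ + (k:ℝ) + 1 with hR_def
  have hRρ : R - ρ = (k:ℝ) + 1 := by rw [hR_def]; ring
  have hRr : R - r = ((k:ℝ) + 1) + (ρ - r) := by rw [hR_def]; ring
  have hRρpos : 0 < R - ρ := by rw [hRρ]; positivity
  have hRrpos : 0 < R - r := by rw [hRr]; have : (0:ℝ) ≤ ρ - r := by linarith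
                                positivity
  have hRpos : 0 < R := by rw [hR_def]; positivity
  set x : Euc n := R • e with hx_def
  have hnx : ‖x‖ = R := by rw [hx_def, norm_smul, hne, Real.norm_eq_abs, abs_of_pos hRpos, mul_one]
  have hx0 : x ≠ 0 := by intro h0; rw [h0] at hnx; simp at hnx; exact absurd hnx.symm (ne_of_gt hRpos)
  set lam : ℝ := Real.sqrt ((R - ρ)*(R - r)) with hlam_def
  have hprod : 0 < (R - ρ)*(R - r) := mul_pos hRρpos hRrpos
  have hlam_pos : 0 < lam := Real.sqrt_pos.mpr hprod
  have hlam2 : lam^2 = (R - ρ)*(R - r) := Real.sq_sqrt hprod.le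
  have hpx : p - x = (r - R) • e := by rw [hp_def, hx_def]; module
  have hnpx : ‖p - x‖ = R - r := by
    rw [hpx, norm_smul, hne, Real.norm_eq_abs, abs_of_neg (by linarith), mul_one]; ring
  have hlam_lt : lam < ‖x‖ := by
    rw [hnx]
    apply lt_of_pow_lt_pow_left₀ 2 hRpos.le
    rw [hlam2]; nlinarith
  have hlam_le : lam ≤ ‖p - x‖ := by
    apply le_of_pow_le_pow_left₀ two_ne_zero (by rw [hnpx]; exact hRrpos.le)
    rw [hlam2, hnpx]; nlinarith
  have himg : x + (lam^2 / ‖p - x‖^2) • (p - x) = w := by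
    rw [hnpx, hlam2, hpx, hx_def, hw_def]
    have h1 : R - r ≠ 0 := ne_of_gt hRrpos
    match_scalars
    all_goals field_simp
    all_goals ring
  have hratio : lam / ‖p - x‖ = Real.sqrt (((k:ℝ)+1)/(((k:ℝ)+1)+(ρ-r))) := by
    have hq : (lam / ‖p - x‖)^2 = ((k:ℝ)+1)/(((k:ℝ)+1)+(ρ-r)) := by
      rw [div_pow, hlam2, hnpx, ← hRr, ← hRρ]
      have h1 : R - r ≠ 0 := ne_of_gt hRrpos
      field_simp
    rw [← hq, Real.sqrt_sq (by positivity)]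
  have := h x hx0 lam hlam_pos hlam_lt p hp0 hlam_le
  rw [himg, hratio] at this
  exact this

theorem stmt9 (n : ℕ) (hn : 3 ≤ n) (u : Euc n → ℝ)
    (hc : ContinuousOn u {(0:Euc n)}ᶜ) (hpos : ∀ x : Euc n, x ≠ 0 → 0 < u x)
    (h : ∀ x : Euc n, x ≠ 0 → ∀ lam : ℝ, 0 < lam → lam < ‖x‖ →
      ∀ y : Euc n, y ≠ 0 → lam ≤ ‖y - x‖ →
      (lam / ‖y - x‖) ^ ((n:ℝ) - 2) * u (x + (lam^2 / ‖y - x‖^2) • (y - x)) ≤ u y) :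
    (∀ y z : Euc n, y ≠ 0 → z ≠ 0 → ‖y‖ = ‖z‖ → u y = u z) ∧
    (∀ y z : Euc n, y ≠ 0 → z ≠ 0 → ‖y‖ ≤ ‖z‖ → u z ≤ u y) := by
  have part1 : ∀ y z : Euc n, y ≠ 0 → z ≠ 0 → ‖y‖ = ‖z‖ → u y = u z :=
    fun y z hy hz hyz =>
      le_antisymm (part1_le n u h y z hy hz hyz) (part1_le n u h z y hz hy hyz.symm)
  exact ⟨part1, fun y z hy hz hyz => part2_le n hn u h part1 y z hy hz hyz⟩
end
end
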